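/- Let k, λ, μ₊, μ₋ be real numbers and let η ≠ 0, μ₊ ≠ 0. Define the coefficients b₁ := 0, c₁ := (kπ/(2η))·(μ₊ − μ₋)/μ₊, a₁ := 1 − c₁η², b₂ := 1, c₂ := −1/(2η), a₂ := 1 − b₂η − c₂η², and the functions u₁⁺(x,y) := (a₁ + b₁y + c₁y²)·sin(kπx), u₂⁺(x,y) := (a₂ + b₂y + c₂y²)·cos(kπx), u₁⁻(x,y) := sin(kπx)·cos(kπ(y−η)), u₂⁻(x,y) := cos(kπx)·cos(kπ(y−η)). Then all three interface conditions hold on the plane {y = η}: for every x ∈ ℝ, (i) u₁⁺(x,η) = u₁⁻(x,η) and u₂⁺(x,η) = u₂⁻(x,η); (ii) μ₊·(∂_y u₁⁺(x,η) + ∂_x u₂⁺(x,η)) = μ₋·(∂_y u₁⁻(x,η) + ∂_x u₂⁻(x,η)); (iii) 2μ₊·∂_y u₂⁺(x,η) + λ·(∂_x u₁⁺(x,η) + ∂_y u₂⁺(x,η)) = 2μ₋·∂_y u₂⁻(x,η) + λ·(∂_x u₁⁻(x,η) + ∂_y u₂⁻(x,η)). -/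

import Mathlib

open Real

private lemma hd_sin (c x : ℝ) : HasDerivAt (fun t => Real.sin (c * t)) (c * Real.cos (c * x)) x := by
  have h := (Real.hasDerivAt_sin (c * x)).comp x ((hasDerivAt_id x).const_mul c)
  simpa [mul_comm, Function.comp_def] using h

private lemma hd_cos (c x : ℝ) : HasDerivAt (fun t => Real.cos (c * t)) (-(c * Real.sin (c * x))) x := by
  have h := (Real.hasDerivAt_cos (c * x)).comp x ((hasDerivAt_id x).const_mul c)
  simpa [mul_comm, Function.comp_def] using h

private lemma hd_poly (a b c s x : ℝ) :
    HasDerivAt (fun t => (a + b * t + c * t ^ 2) * s) ((b + 2 * c * x) * s) x := by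
  have h : HasDerivAt (fun t : ℝ => a + b * t + c * t ^ 2) (b + 2 * c * x) x := by
    have h1 : HasDerivAt (fun t : ℝ => a + b * t) b x := by
      simpa using ((hasDerivAt_id x).const_mul b).const_add a
    have h2 : HasDerivAt (fun t : ℝ => c * t ^ 2) (c * (2 * x)) x := by
      simpa using ((hasDerivAt_pow 2 x).const_mul c)
    have := h1.add h2
    exact this.congr_deriv (by ring)
  simpa using h.mul_const s

/-- The explicit choice of coefficients from the paper makes the piecewise
ansatz satisfy all three interface conditions on the plane `y = η`:
(i) continuity of the displacement, (ii) the first and (iii) the second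
component of the traction condition `[σ(u)·n]_Γ = 0`. -/
theorem stmt_9 (k lam η μp μm a₁ b₁ c₁ a₂ b₂ c₂ : ℝ)
    (hη : η ≠ 0) (hμp : μp ≠ 0)
    (hb₁ : b₁ = 0)
    (hc₁ : c₁ = (k * π / (2 * η)) * ((μp - μm) / μp))
    (ha₁ : a₁ = 1 - c₁ * η ^ 2)
    (hb₂ : b₂ = 1)
    (hc₂ : c₂ = -(1 / (2 * η)))
    (ha₂ : a₂ = 1 - b₂ * η - c₂ * η ^ 2)
    (u₁p u₂p u₁m u₂m : ℝ → ℝ → ℝ)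
    (hu₁p : ∀ x y, u₁p x y = (a₁ + b₁ * y + c₁ * y ^ 2) * Real.sin (k * π * x))
    (hu₂p : ∀ x y, u₂p x y = (a₂ + b₂ * y + c₂ * y ^ 2) * Real.cos (k * π * x))
    (hu₁m : ∀ x y, u₁m x y = Real.sin (k * π * x) * Real.cos (k * π * (y - η)))
    (hu₂m : ∀ x y, u₂m x y = Real.cos (k * π * x) * Real.cos (k * π * (y - η))) :
    ∀ x : ℝ,
      (u₁p x η = u₁m x η ∧ u₂p x η = u₂m x η) ∧
      μp * (deriv (fun y => u₁p x y) η + deriv (fun x' => u₂p x' η) x) =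
        μm * (deriv (fun y => u₁m x y) η + deriv (fun x' => u₂m x' η) x) ∧
      2 * μp * deriv (fun y => u₂p x y) η +
          lam * (deriv (fun x' => u₁p x' η) x + deriv (fun y => u₂p x y) η) =
        2 * μm * deriv (fun y => u₂m x y) η +
          lam * (deriv (fun x' => u₁m x' η) x + deriv (fun y => u₂m x y) η) := by
  intro x
  set s := Real.sin (k * π * x) with hs
  set c := Real.cos (k * π * x) with hc
  -- values of the polynomials at η
  have hp1 : a₁ + b₁ * η + c₁ * η ^ 2 = 1 := by rw [ha₁, hb₁]; ring
  have hp2 : a₂ + b₂ * η + c₂ * η ^ 2 = 1 := by rw [ha₂]; ring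
  -- derivatives in y
  have d1p : deriv (fun y => u₁p x y) η = (b₁ + 2 * c₁ * η) * s := by
    have : (fun y => u₁p x y) = fun y => (a₁ + b₁ * y + c₁ * y ^ 2) * s := by
      funext y; rw [hu₁p]
    rw [this]; exact (hd_poly a₁ b₁ c₁ s η).deriv
  have d2p : deriv (fun y => u₂p x y) η = (b₂ + 2 * c₂ * η) * c := by
    have : (fun y => u₂p x y) = fun y => (a₂ + b₂ * y + c₂ * y ^ 2) * c := by
      funext y; rw [hu₂p]
    rw [this]; exact (hd_poly a₂ b₂ c₂ c η).deriv
  have d1m : deriv (fun y => u₁m x y) η = 0 := by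
    have heq : (fun y => u₁m x y) = fun y => s * Real.cos (k * π * (y - η)) := by
      funext y; rw [hu₁m]
    rw [heq]
    have h : HasDerivAt (fun y => s * Real.cos (k * π * (y - η)))
        (s * (-(k * π * Real.sin (k * π * (η - η))))) η := by
      have hin : HasDerivAt (fun y : ℝ => Real.cos (k * π * (y - η)))
          (-(k * π * Real.sin (k * π * (η - η)))) η := by
        simpa using (hd_cos (k * π) (η - η)).comp_sub_const (x := η)
      exact hin.const_mul s
    rw [h.deriv]; simp
  have d2m : deriv (fun y => u₂m x y) η = 0 := by
    have heq : (fun y => u₂m x y) = fun y => c * Real.cos (k * π * (y - η)) := by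
      funext y; rw [hu₂m]
    rw [heq]
    have hin : HasDerivAt (fun y : ℝ => Real.cos (k * π * (y - η)))
        (-(k * π * Real.sin (k * π * (η - η)))) η := by
      simpa using (hd_cos (k * π) (η - η)).comp_sub_const (x := η)
    rw [(hin.const_mul c).deriv]; simp
  -- derivatives in x
  have dx1p : deriv (fun x' => u₁p x' η) x = k * π * c := by
    have heq : (fun x' => u₁p x' η) = fun x' => Real.sin (k * π * x') := by
      funext x'; rw [hu₁p, hp1, one_mul]
    rw [heq, (hd_sin (k * π) x).deriv]
  have dx2p : deriv (fun x' => u₂p x' η) x = -(k * π * s) := by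
    have heq : (fun x' => u₂p x' η) = fun x' => Real.cos (k * π * x') := by
      funext x'; rw [hu₂p, hp2, one_mul]
    rw [heq, (hd_cos (k * π) x).deriv]
  have dx1m : deriv (fun x' => u₁m x' η) x = k * π * c := by
    have heq : (fun x' => u₁m x' η) = fun x' => Real.sin (k * π * x') := by
      funext x'; rw [hu₁m]; simp
    rw [heq, (hd_sin (k * π) x).deriv]
  have dx2m : deriv (fun x' => u₂m x' η) x = -(k * π * s) := by
    have heq : (fun x' => u₂m x' η) = fun x' => Real.cos (k * π * x') := by
      funext x'; rw [hu₂m]; simp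
    rw [heq, (hd_cos (k * π) x).deriv]
  refine ⟨⟨?_, ?_⟩, ?_, ?_⟩
  · rw [hu₁p, hu₁m, hp1]; simp
  · rw [hu₂p, hu₂m, hp2]; simp
  · rw [d1p, dx2p, d1m, dx2m]
    have hc1 : 2 * c₁ * η = k * π * ((μp - μm) / μp) := by
      rw [hc₁]; field_simp
    rw [hb₁, hc1]
    field_simp
    ring
  · rw [d2p, dx1p, d2m, dx1m]
    have : b₂ + 2 * c₂ * η = 0 := by rw [hb₂, hc₂]; field_simp; norm_num
    rw [this]
    ring
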